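/- Let T = [[T₁₁, T₁₂],[0, T₂₂]] where T₁₁, T₂₂ are strongly irreducible with semi-simple commutants, T₁₂ ≠ 0 has dense range, and T₁₁T₁₂ = T₁₂T₂₂. Then T is strongly irreducible if and only if T₁₂ is not in the range of the Rosenblum operator τ_{T₁₁,T₂₂}, i.e., there is no bounded X with T₁₁X − XT₂₂ = T₁₂. -/

import Mathlib

open Filter ContinuousLinearMap
open scoped ENNReal NNReal


/-- An operator is quasi-nilpotent if `‖P^n‖^{1/n} → 0`. -/
def QuasiNilpotent {H : Type*} [NormedAddCommGroup H] [NormedSpace ℂ H]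
    (P : H →L[ℂ] H) : Prop :=
  Filter.Tendsto (fun n : ℕ => ‖P ^ n‖ ^ ((n : ℝ)⁻¹)) Filter.atTop (nhds 0)

/-- A bounded operator is strongly irreducible if the only idempotents commuting with it
are `0` and `1`. -/
def StronglyIrreducible {H : Type*} [NormedAddCommGroup H] [NormedSpace ℂ H]
    (T : H →L[ℂ] H) : Prop :=
  ∀ P : H →L[ℂ] H, P ∘L P = P → P ∘L T = T ∘L P → P = 0 ∨ P = 1

lemma kleinecke {H : Type*} [NormedAddCommGroup H] [NormedSpace ℂ H] [CompleteSpace H]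
    [Nontrivial H] (t a : H →L[ℂ] H)
    (hcomm : t * (t * a - a * t) = (t * a - a * t) * t) :
    QuasiNilpotent (t * a - a * t) := by
  set c : H →L[ℂ] H := t * a - a * t with hc
  set δ : (H →L[ℂ] H) → (H →L[ℂ] H) := fun x => t * x - x * t with hδ
  have dmul : ∀ x y : H →L[ℂ] H, δ (x * y) = δ x * y + x * δ y := by
    intro x y; simp only [hδ]; noncomm_ring
  have dadd : ∀ x y : H →L[ℂ] H, δ (x + y) = δ x + δ y := by
    intro x y; simp only [hδ]; noncomm_ring
  have dsmul : ∀ (r : ℂ) (x : H →L[ℂ] H), δ (r • x) = r • δ x := by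
    intro r x; simp only [hδ, mul_smul_comm, smul_mul_assoc, smul_sub]
  have da : δ a = c := rfl
  have dc : δ c = 0 := sub_eq_zero.mpr hcomm
  have hcommute : Commute t c := hcomm
  have dcpow : ∀ n : ℕ, δ (c ^ n) = 0 := fun n =>
    sub_eq_zero.mpr (hcommute.pow_right n).eq
  have dcmul : ∀ x : H →L[ℂ] H, δ (c * x) = c * δ x := by
    intro x; rw [dmul, dc, zero_mul, zero_add]
  have iter_add : ∀ (n : ℕ) (x y : H →L[ℂ] H), δ^[n] (x + y) = δ^[n] x + δ^[n] y := by
    intro n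
    induction n with
    | zero => simp
    | succ n ih =>
      intro x y
      rw [Function.iterate_succ_apply, Function.iterate_succ_apply,
        Function.iterate_succ_apply, dadd, ih]
  have iter_cmul : ∀ (n : ℕ) (x : H →L[ℂ] H), δ^[n] (c * x) = c * δ^[n] x := by
    intro n
    induction n with
    | zero => simp
    | succ n ih =>
      intro x
      rw [Function.iterate_succ_apply, Function.iterate_succ_apply, dcmul, ih]
  have L : ∀ (n : ℕ) (x : H →L[ℂ] H),
      δ^[n + 1] (a * x) = a * δ^[n + 1] x + ((n : ℂ) + 1) • (c * δ^[n] x) := by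
    intro n
    induction n with
    | zero =>
      intro x
      simp only [Function.iterate_one, Nat.cast_zero, zero_add, one_smul,
        Function.iterate_zero, id_eq]
      rw [dmul, da]; abel
    | succ n ih =>
      intro x
      rw [Function.iterate_succ_apply δ (n + 1) (a * x), dmul, da, iter_add, iter_cmul, ih (δ x),
        ← Function.iterate_succ_apply, ← Function.iterate_succ_apply]
      push_cast
      module
  have main : ∀ n : ℕ, δ^[n] (a ^ n) = (n.factorial : ℂ) • c ^ n := by
    intro n
    induction n with
    | zero => simp
    | succ n ih =>
      have h1 : δ^[n + 1] (a ^ n) = 0 := by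
        rw [Function.iterate_succ_apply', ih, dsmul, dcpow, smul_zero]
      rw [pow_succ' a n, L n (a ^ n), h1, mul_zero, zero_add, ih, mul_smul_comm,
        smul_smul, ← pow_succ' c n]
      congr 1
      rw [Nat.factorial_succ]
      push_cast
      ring
  have dnorm : ∀ x : H →L[ℂ] H, ‖δ x‖ ≤ 2 * ‖t‖ * ‖x‖ := by
    intro x
    calc ‖t * x - x * t‖ ≤ ‖t * x‖ + ‖x * t‖ := norm_sub_le _ _
      _ ≤ ‖t‖ * ‖x‖ + ‖x‖ * ‖t‖ := add_le_add (norm_mul_le _ _) (norm_mul_le _ _)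
      _ = 2 * ‖t‖ * ‖x‖ := by ring
  have iter_norm : ∀ (n : ℕ) (x : H →L[ℂ] H), ‖δ^[n] x‖ ≤ (2 * ‖t‖) ^ n * ‖x‖ := by
    intro n
    induction n with
    | zero => simp
    | succ n ih =>
      intro x
      calc ‖δ^[n + 1] x‖ = ‖δ^[n] (δ x)‖ := by rw [Function.iterate_succ_apply]
        _ ≤ (2 * ‖t‖) ^ n * ‖δ x‖ := ih (δ x)
        _ ≤ (2 * ‖t‖) ^ n * (2 * ‖t‖ * ‖x‖) :=
            mul_le_mul_of_nonneg_left (dnorm x) (by positivity)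
        _ = (2 * ‖t‖) ^ (n + 1) * ‖x‖ := by ring
  have cn : ∀ n : ℕ, ‖c ^ n‖ ≤ (2 * ‖t‖ * ‖a‖) ^ n / n.factorial := by
    intro n
    have h1 : ‖(n.factorial : ℂ) • c ^ n‖ ≤ (2 * ‖t‖) ^ n * ‖a ^ n‖ := by
      rw [← main n]; exact iter_norm n _
    have hns := norm_smul (α := ℂ) (β := H →L[ℂ] H) (n.factorial : ℂ) (c ^ n)
    rw [hns] at h1
    rw [show ‖(n.factorial : ℂ)‖ = (n.factorial : ℝ) by simp] at h1
    have h2 : (2 * ‖t‖) ^ n * ‖a ^ n‖ ≤ (2 * ‖t‖ * ‖a‖) ^ n := by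
      have h0 : (0:ℝ) ≤ (2 * ‖t‖) ^ n := by positivity
      calc (2 * ‖t‖) ^ n * ‖a ^ n‖ ≤ (2 * ‖t‖) ^ n * ‖a‖ ^ n :=
            mul_le_mul_of_nonneg_left (norm_pow_le a n) h0
        _ = (2 * ‖t‖ * ‖a‖) ^ n := (mul_pow _ _ _).symm
    have hf : (0 : ℝ) < (n.factorial : ℝ) := mod_cast n.factorial_pos
    rw [le_div_iff₀ hf]
    calc ‖c ^ n‖ * (n.factorial : ℝ) = (n.factorial : ℝ) * ‖c ^ n‖ := mul_comm _ _
      _ ≤ (2 * ‖t‖) ^ n * ‖a ^ n‖ := h1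
      _ ≤ (2 * ‖t‖ * ‖a‖) ^ n := h2
  -- spectral radius is zero
  have hsr : spectralRadius ℂ c = 0 := by
    refine le_antisymm (ENNReal.le_of_forall_pos_le_add fun ε hε _ => ?_) (zero_le)
    rw [zero_add]
    set M : ℝ := 2 * ‖t‖ * ‖a‖ with hM
    have hεR : (0 : ℝ) < (ε : ℝ) := hε
    obtain ⟨N, hN⟩ := eventually_atTop.mp
      ((FloorSemiring.tendsto_pow_div_factorial_atTop (M / (ε : ℝ))).eventually_lt_const
        one_pos)
    set n : ℕ := N + 1 with hn
    have h3 : (M / (ε : ℝ)) ^ n / (n.factorial : ℝ) < 1 := hN n (Nat.le_succ N)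
    have hf : (0 : ℝ) < (n.factorial : ℝ) := mod_cast n.factorial_pos
    have hp : (0 : ℝ) < (ε : ℝ) ^ n := pow_pos hεR n
    have h4 : M ^ n / (n.factorial : ℝ) < (ε : ℝ) ^ n := by
      rw [div_pow, div_div] at h3
      rw [div_lt_one (by positivity)] at h3
      rw [div_lt_iff₀ hf]
      calc M ^ n < (ε : ℝ) ^ n * (n.factorial : ℝ) := h3
        _ = (ε : ℝ) ^ n * (n.factorial : ℝ) := rfl
    have key : ‖c ^ n‖ ≤ ((ε : ℝ)) ^ n := (cn n).trans h4.le
    have key' : ‖c ^ n‖₊ ≤ ε ^ n := by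
      rw [← NNReal.coe_le_coe, coe_nnnorm, NNReal.coe_pow]
      exact key
    have hne : ((n : ℝ)) ≠ 0 := by positivity
    calc spectralRadius ℂ c
        ≤ (‖c ^ (N + 1)‖₊ : ℝ≥0∞) ^ (1 / (N + 1) : ℝ) *
          (‖(1 : H →L[ℂ] H)‖₊ : ℝ≥0∞) ^ (1 / (N + 1) : ℝ) :=
          spectrum.spectralRadius_le_pow_nnnorm_pow_one_div ℂ c N
      _ = (‖c ^ n‖₊ : ℝ≥0∞) ^ (1 / (n : ℝ)) := by
          rw [nnnorm_one, ENNReal.coe_one, ENNReal.one_rpow, mul_one]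
          norm_num [hn]
      _ ≤ ((ε ^ n : ℝ≥0) : ℝ≥0∞) ^ (1 / (n : ℝ)) :=
          ENNReal.rpow_le_rpow (by exact_mod_cast key') (by positivity)
      _ = (ε : ℝ≥0∞) := by
          rw [ENNReal.coe_pow, ← ENNReal.rpow_natCast ((ε : ℝ≥0∞)) n, ← ENNReal.rpow_mul,
            mul_one_div_cancel hne, ENNReal.rpow_one]
  have gel := spectrum.pow_nnnorm_pow_one_div_tendsto_nhds_spectralRadius c
  rw [hsr] at gel
  have h5 := (ENNReal.tendsto_toReal (by simp : (0 : ℝ≥0∞) ≠ ⊤)).comp gel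
  simp only [ENNReal.toReal_zero] at h5
  refine h5.congr fun n => ?_
  simp only [Function.comp_apply, ← ENNReal.toReal_rpow, ENNReal.coe_toReal, coe_nnnorm,
    one_div]

/-- Let `T = [[T₁₁,T₁₂],[0,T₂₂]]` where `T₁₁`, `T₂₂` are strongly
irreducible with semi-simple commutants, `T₁₂ ≠ 0` has dense range, and
`T₁₁ T₁₂ = T₁₂ T₂₂`. Then `T` is strongly irreducible iff `T₁₂ ∉ ran τ_{T₁₁,T₂₂}`. -/
theorem stmt7 {H₁ H₂ : Type*}
    [NormedAddCommGroup H₁] [InnerProductSpace ℂ H₁] [CompleteSpace H₁]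
    [NormedAddCommGroup H₂] [InnerProductSpace ℂ H₂] [CompleteSpace H₂]
    (T11 : H₁ →L[ℂ] H₁) (T22 : H₂ →L[ℂ] H₂) (T12 : H₂ →L[ℂ] H₁)
    (hSI1 : StronglyIrreducible T11) (hSI2 : StronglyIrreducible T22)
    (hss1 : ∀ Q : H₁ →L[ℂ] H₁, T11 * Q = Q * T11 → QuasiNilpotent Q → Q = 0)
    (hss2 : ∀ Q : H₂ →L[ℂ] H₂, T22 * Q = Q * T22 → QuasiNilpotent Q → Q = 0)
    (h12ne : T12 ≠ 0) (h12dr : DenseRange T12)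
    (hflag : T11 ∘L T12 = T12 ∘L T22)
    (T : (H₁ × H₂) →L[ℂ] (H₁ × H₂))
    (hT : ∀ x y, T (x, y) = (T11 x + T12 y, T22 y)) :
    StronglyIrreducible T ↔ ¬ ∃ X : H₂ →L[ℂ] H₁, T11 ∘L X - X ∘L T22 = T12 := by
  obtain ⟨y₀, hy₀⟩ : ∃ y, T12 y ≠ 0 := by
    by_contra h
    push_neg at h
    exact h12ne (by ext y; simp [h y])
  have hflagpt : ∀ y, T11 (T12 y) = T12 (T22 y) := fun y => by
    have := ContinuousLinearMap.ext_iff.mp hflag y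
    simpa using this
  constructor
  · -- SI → no solution
    intro hSI hX
    obtain ⟨X, hXe⟩ := hX
    have hXpt : ∀ y, T11 (X y) - X (T22 y) = T12 y := fun y => by
      have := ContinuousLinearMap.ext_iff.mp hXe y
      simpa using this
    obtain ⟨P, hPapp⟩ : ∃ P : (H₁ × H₂) →L[ℂ] (H₁ × H₂), ∀ x y, P (x, y) = (x + X y, 0) :=
      ⟨(ContinuousLinearMap.inl ℂ H₁ H₂).comp
        ((ContinuousLinearMap.fst ℂ H₁ H₂) + X.comp (ContinuousLinearMap.snd ℂ H₁ H₂)),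
        fun x y => by simp⟩
    have hP2 : P ∘L P = P := by
      refine ContinuousLinearMap.ext fun z => ?_
      obtain ⟨x, y⟩ := z
      rw [comp_apply]
      simp only [hPapp, map_zero, add_zero]
    have hPT : P ∘L T = T ∘L P := by
      refine ContinuousLinearMap.ext fun z => ?_
      obtain ⟨x, y⟩ := z
      rw [comp_apply, comp_apply, hT x y, hPapp, hPapp x y, hT]
      simp only [map_zero, add_zero, map_add]
      refine Prod.ext ?_ rfl
      show T11 x + T12 y + X (T22 y) = T11 x + T11 (X y)
      rw [← hXpt y]
      abel
    rcases hSI P hP2 hPT with h0 | h1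
    · have h := ContinuousLinearMap.ext_iff.mp h0 (T12 y₀, 0)
      rw [hPapp] at h
      simp only [map_zero, add_zero, ContinuousLinearMap.zero_apply, Prod.mk_eq_zero] at h
      exact hy₀ h.1
    · have h := ContinuousLinearMap.ext_iff.mp h1 (0, y₀)
      rw [hPapp] at h
      simp only [ContinuousLinearMap.one_apply, Prod.mk.injEq] at h
      exact hy₀ (by rw [← h.2, map_zero])
  · -- no solution → SI
    intro hnoX P hP2 hPT
    haveI : Nontrivial H₂ := ⟨⟨y₀, 0, fun h => hy₀ (by rw [h, map_zero])⟩⟩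
    haveI : Nontrivial H₁ := ⟨⟨T12 y₀, 0, hy₀⟩⟩
    set A : H₁ →L[ℂ] H₁ :=
      (ContinuousLinearMap.fst ℂ H₁ H₂).comp (P.comp (ContinuousLinearMap.inl ℂ H₁ H₂)) with hA
    set B : H₂ →L[ℂ] H₁ :=
      (ContinuousLinearMap.fst ℂ H₁ H₂).comp (P.comp (ContinuousLinearMap.inr ℂ H₁ H₂)) with hB
    set C : H₁ →L[ℂ] H₂ :=
      (ContinuousLinearMap.snd ℂ H₁ H₂).comp (P.comp (ContinuousLinearMap.inl ℂ H₁ H₂)) with hC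
    set D : H₂ →L[ℂ] H₂ :=
      (ContinuousLinearMap.snd ℂ H₁ H₂).comp (P.comp (ContinuousLinearMap.inr ℂ H₁ H₂)) with hD
    have hPapp : ∀ x y, P (x, y) = (A x + B y, C x + D y) := by
      intro x y
      have hz : ((x, y) : H₁ × H₂) = (x, 0) + (0, y) := by simp
      rw [hz, map_add]
      simp only [hA, hB, hC, hD, comp_apply, coe_fst', coe_snd', inl_apply, inr_apply]
      exact Prod.ext rfl rfl
    have hPpt : ∀ z, P (P z) = P z := fun z => by
      have := ContinuousLinearMap.ext_iff.mp hP2 z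
      rwa [comp_apply] at this
    -- commutation equations
    have ePT1 : ∀ x : H₁,
        A (T11 x) = T11 (A x) + T12 (C x) ∧ C (T11 x) = T22 (C x) := by
      intro x
      have h := ContinuousLinearMap.ext_iff.mp hPT (x, 0)
      rw [comp_apply, comp_apply] at h
      simp only [hT, hPapp, map_zero, add_zero, zero_add, Prod.mk.injEq] at h
      exact h
    have ePT2 : ∀ y : H₂,
        A (T12 y) + B (T22 y) = T11 (B y) + T12 (D y) ∧
        C (T12 y) + D (T22 y) = T22 (D y) := by
      intro y
      have h := ContinuousLinearMap.ext_iff.mp hPT (0, y)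
      rw [comp_apply, comp_apply] at h
      simp only [hT, hPapp, map_zero, add_zero, zero_add, Prod.mk.injEq] at h
      exact h
    have e1 : ∀ x, A (T11 x) = T11 (A x) + T12 (C x) := fun x => (ePT1 x).1
    have e3 : ∀ x, C (T11 x) = T22 (C x) := fun x => (ePT1 x).2
    have e2 : ∀ y, A (T12 y) + B (T22 y) = T11 (B y) + T12 (D y) := fun y => (ePT2 y).1
    have e4 : ∀ y, C (T12 y) + D (T22 y) = T22 (D y) := fun y => (ePT2 y).2
    -- kill C using Kleinecke-Shirokov + semisimplicity
    have hCT12 : T22 * D - D * T22 = C.comp T12 := by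
      ext y
      simp only [ContinuousLinearMap.sub_apply, ContinuousLinearMap.mul_apply, comp_apply]
      have h := e4 y
      have : C (T12 y) = T22 (D y) - D (T22 y) := by rw [← h]; abel
      rw [this]
    have hcomm2 : T22 * (T22 * D - D * T22) = (T22 * D - D * T22) * T22 := by
      rw [hCT12]
      ext y
      simp only [ContinuousLinearMap.mul_apply, comp_apply]
      rw [← hflagpt y, e3 (T12 y)]
    have hqn2 := kleinecke T22 D hcomm2
    have hDc : T22 * D - D * T22 = 0 := hss2 _ hcomm2 hqn2
    have hC12 : C.comp T12 = 0 := by rw [← hCT12, hDc]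
    have cpt : ∀ x, C x = 0 := by
      intro x
      have h1 : ∀ y, C (T12 y) = 0 := fun y => by
        have := ContinuousLinearMap.ext_iff.mp hC12 y
        simpa using this
      have hcl : IsClosed {x : H₁ | C x = 0} := isClosed_eq C.continuous continuous_const
      have hsub : Set.range T12 ⊆ {x : H₁ | C x = 0} := by
        rintro _ ⟨y, rfl⟩; exact h1 y
      exact hcl.closure_subset_iff.mpr hsub (h12dr x)
    have e1' : ∀ x, A (T11 x) = T11 (A x) := fun x => by
      have := e1 x; rwa [cpt x, map_zero, add_zero] at this
    have e4' : ∀ y, D (T22 y) = T22 (D y) := fun y => by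
      have := e4 y; rwa [cpt (T12 y), zero_add] at this
    -- idempotency equations
    have hAA : ∀ x, A (A x) = A x := by
      intro x
      have h := hPpt (x, 0)
      simp only [hPapp, cpt, map_zero, add_zero, zero_add, Prod.mk.injEq, and_true,
        true_and] at h
      exact h
    have hDD : ∀ y, A (B y) + B (D y) = B y ∧ D (D y) = D y := by
      intro y
      have h := hPpt (0, y)
      simp only [hPapp, cpt, map_zero, add_zero, zero_add, Prod.mk.injEq, and_true,
        true_and] at h
      exact h
    have hAc : A ∘L A = A := ContinuousLinearMap.ext fun x => by
      rw [comp_apply]; exact hAA x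
    have hAT : A ∘L T11 = T11 ∘L A := ContinuousLinearMap.ext fun x => by
      rw [comp_apply, comp_apply]; exact e1' x
    have hDc2 : D ∘L D = D := ContinuousLinearMap.ext fun y => by
      rw [comp_apply]; exact (hDD y).2
    have hDT : D ∘L T22 = T22 ∘L D := ContinuousLinearMap.ext fun y => by
      rw [comp_apply, comp_apply]; exact e4' y
    rcases hSI1 A hAc hAT with hA0 | hA1 <;> rcases hSI2 D hDc2 hDT with hD0 | hD1
    · -- A = 0, D = 0 : P = 0
      have apt : ∀ x, A x = 0 := fun x => by rw [hA0]; rfl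
      have dpt : ∀ y, D y = 0 := fun y => by rw [hD0]; rfl
      have bpt : ∀ y, B y = 0 := fun y => by
        have h := (hDD y).1
        rw [apt, dpt, map_zero, add_zero] at h
        exact h.symm
      left
      refine ContinuousLinearMap.ext fun z => ?_
      obtain ⟨x, y⟩ := z
      rw [hPapp, apt, bpt, cpt, dpt]
      simp
    · -- A = 0, D = 1 : solution -B, contradiction
      exfalso
      have apt : ∀ x, A x = 0 := fun x => by rw [hA0]; rfl
      have dpt : ∀ y, D y = y := fun y => by rw [hD1]; rfl
      refine hnoX ⟨-B, ?_⟩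
      ext y
      have h := e2 y
      rw [apt, dpt, zero_add] at h
      show T11 (-(B y)) - -(B (T22 y)) = T12 y
      rw [map_neg, h]
      abel
    · -- A = 1, D = 0 : solution B, contradiction
      exfalso
      have apt : ∀ x, A x = x := fun x => by rw [hA1]; rfl
      have dpt : ∀ y, D y = 0 := fun y => by rw [hD0]; rfl
      refine hnoX ⟨B, ?_⟩
      ext y
      have h := e2 y
      rw [apt, dpt, map_zero, add_zero] at h
      show T11 (B y) - B (T22 y) = T12 y
      rw [← h]
      abel
    · -- A = 1, D = 1 : P = 1
      have apt : ∀ x, A x = x := fun x => by rw [hA1]; rfl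
      have dpt : ∀ y, D y = y := fun y => by rw [hD1]; rfl
      have bpt : ∀ y, B y = 0 := fun y => by
        have h := (hDD y).1
        rw [apt, dpt] at h
        have : B y + B y = B y := h
        have h2 : B y + B y = B y + 0 := by rw [add_zero]; exact this
        exact add_left_cancel h2
      right
      refine ContinuousLinearMap.ext fun z => ?_
      obtain ⟨x, y⟩ := z
      rw [hPapp, apt, bpt, cpt, dpt]
      simp
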